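/- Let g : [0,∞) → [0,∞) be monotonically decreasing (antitone) and integrable. For t ≥ 0, let A = {(x,s) ∈ ℝ² : s ≤ 0 and 0 < x < g(−s)} and A_t = {(x,s) ∈ ℝ² : s ≤ t and 0 < x < g(t−s)}. Then the two-dimensional Lebesgue measure of A ∩ A_t equals ∫_t^∞ g(u) du. -/
import Mathlib

open MeasureTheory Set

/-- Overlap area of trawl sets: for an antitone integrable `g : [0,∞) → [0,∞)`,
the Lebesgue measure of `A ∩ A_t` equals `∫_t^∞ g(u) du`, where
`A = {(x,s) : s ≤ 0, 0 < x < g(−s)}` and `A_t = {(x,s) : s ≤ t, 0 < x < g(t−s)}`. -/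
theorem trawl_set_overlap_area
    (g : ℝ → ℝ) (hg_anti : AntitoneOn g (Ici 0))
    (hg_nonneg : ∀ x ≥ (0:ℝ), 0 ≤ g x)
    (hg_int : IntegrableOn g (Ioi 0))
    (t : ℝ) (ht : 0 ≤ t) :
    volume ({z : ℝ × ℝ | z.2 ≤ 0 ∧ 0 < z.1 ∧ z.1 < g (-z.2)} ∩
            {z : ℝ × ℝ | z.2 ≤ t ∧ 0 < z.1 ∧ z.1 < g (t - z.2)})
      = ENNReal.ofReal (∫ u in Ioi t, g u) := by
  -- a globally antitone (hence measurable) modification of `g` agreeing with `g` on `[t, ∞)`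
  set G : ℝ → ℝ := fun u => g (max u t) with hG
  have hGanti : Antitone G := fun a b hab =>
    hg_anti (mem_Ici.2 (ht.trans (le_max_right a t))) (mem_Ici.2 (ht.trans (le_max_right b t)))
      (max_le_max hab le_rfl)
  have hGmeas : Measurable G := hGanti.measurable
  have hGeq : ∀ u, t ≤ u → G u = g u := fun u hu => by simp [hG, max_eq_left hu]
  -- integrability of `G` on `Ioi t`
  have hGint : IntegrableOn G (Ioi t) := by
    refine ((hg_int.mono_set (Ioi_subset_Ioi ht)).congr_fun ?_ measurableSet_Ioi)
    exact fun u hu => (hGeq u (le_of_lt hu)).symm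
  -- the reflection `e : s ↦ t - s`
  set e : ℝ → ℝ := fun s => t - s with he
  have he_emb : MeasurableEmbedding e := by
    have : e = fun s => -s + t := by funext s; simp [he]; ring
    rw [this]
    exact ((Homeomorph.neg ℝ).trans (Homeomorph.addRight t)).measurableEmbedding
  have he_mp : MeasurePreserving e volume volume :=
    Measure.measurePreserving_sub_left volume t
  have hpre : e ⁻¹' (Ioi t) = Iio 0 := by
    ext x; simp only [mem_preimage, mem_Ioi, mem_Iio, he]; constructor <;> intro h <;> linarith
  -- integrability of `s ↦ G (t - s)` on `Iic 0`
  have hint_comp : IntegrableOn (fun s => G (t - s)) (Iic 0) := by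
    have h1 : IntegrableOn (G ∘ e) (e ⁻¹' (Ioi t)) :=
      (he_mp.integrableOn_comp_preimage he_emb).2 hGint
    rw [hpre] at h1
    have : IntegrableOn (G ∘ e) (Iic 0) := by
      rwa [integrableOn_Iic_iff_integrableOn_Iio]
    exact this
  -- the intersection set is the (swapped) region between `0` and `s ↦ G (t - s)` over `Iic 0`
  have hset : ({z : ℝ × ℝ | z.2 ≤ 0 ∧ 0 < z.1 ∧ z.1 < g (-z.2)} ∩
            {z : ℝ × ℝ | z.2 ≤ t ∧ 0 < z.1 ∧ z.1 < g (t - z.2)})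
      = Prod.swap ⁻¹' regionBetween (fun _ => (0:ℝ)) (fun s => G (t - s)) (Iic 0) := by
    ext ⟨x, s⟩
    simp only [mem_inter_iff, mem_setOf_eq, mem_preimage, Prod.swap_prod_mk, regionBetween,
      mem_Iic, mem_Ioo]
    constructor
    · rintro ⟨⟨hs0, hx0, _⟩, _, _, hxg⟩
      have hts : t ≤ t - s := by linarith
      exact ⟨hs0, hx0, by rw [hGeq _ hts]; exact hxg⟩
    · rintro ⟨hs0, hx0, hxG⟩
      have hts : t ≤ t - s := by linarith
      rw [hGeq _ hts] at hxG
      have h1 : g (t - s) ≤ g (-s) :=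
        hg_anti (mem_Ici.2 (by linarith)) (mem_Ici.2 (by linarith)) (by linarith)
      exact ⟨⟨hs0, hx0, lt_of_lt_of_le hxG h1⟩, hs0.trans ht, hx0, hxG⟩
  have hRmeas : MeasurableSet (regionBetween (fun _ => (0:ℝ)) (fun s => G (t - s)) (Iic 0)) :=
    measurableSet_regionBetween measurable_const
      (hGmeas.comp (measurable_const.sub measurable_id)) measurableSet_Iic
  rw [hset]
  have hswap : volume (Prod.swap ⁻¹' regionBetween (fun _ => (0:ℝ))
      (fun s => G (t - s)) (Iic 0))
      = volume (regionBetween (fun _ => (0:ℝ)) (fun s => G (t - s)) (Iic 0)) := by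
    rw [Measure.volume_eq_prod]
    exact Measure.measurePreserving_swap.measure_preimage hRmeas.nullMeasurableSet
  rw [hswap, Measure.volume_eq_prod]
  have h0int : IntegrableOn (fun _ : ℝ => (0:ℝ)) (Iic 0) := integrableOn_zero
  rw [volume_regionBetween_eq_integral h0int hint_comp measurableSet_Iic
    (fun s hs => hg_nonneg _ (ht.trans (le_max_right _ t)))]
  congr 1
  simp only [Pi.sub_apply, sub_zero]
  calc ∫ s in Iic 0, G (t - s) = ∫ s in Iio 0, G (t - s) := by
        rw [integral_Iic_eq_integral_Iio]
    _ = ∫ s in e ⁻¹' (Ioi t), G (e s) := by rw [hpre]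
    _ = ∫ u in Ioi t, G u := he_mp.setIntegral_preimage_emb he_emb G (Ioi t)
    _ = ∫ u in Ioi t, g u :=
        setIntegral_congr_fun measurableSet_Ioi (fun u hu => hGeq u (le_of_lt hu))
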